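/- If X and Y are equivalent fuzzy numbers, i.e. there exist symmetric fuzzy numbers S₁, S₂ (S(t) = S(−t) for all t) with X + S₁ = Y + S₂, then X and Y have the same midpoint function: (X̲^(α) + X̄^(α))/2 = (Y̲^(α) + Ȳ^(α))/2 for every α ∈ [0,1]. -/

import Mathlib

open Finset Filter Topology

/-- A fuzzy number, represented (via the Representation Theorem) by the pair of
functions `α ↦ X̲^(α)` and `α ↦ X̄^(α)` giving the endpoints of its α-cuts. -/
structure FuzzyNumber where
  lower : ℝ → ℝ
  upper : ℝ → ℝ
  lower_mono : MonotoneOn lower (Set.Icc 0 1)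
  upper_anti : AntitoneOn upper (Set.Icc 0 1)
  lower_leftCont : ∀ a ∈ Set.Ioc (0:ℝ) 1, ContinuousWithinAt lower (Set.Iic a) a
  upper_leftCont : ∀ a ∈ Set.Ioc (0:ℝ) 1, ContinuousWithinAt upper (Set.Iic a) a
  lower_rightCont : ContinuousWithinAt lower (Set.Ici 0) 0
  upper_rightCont : ContinuousWithinAt upper (Set.Ici 0) 0
  le_at_one : lower 1 ≤ upper 1

namespace FuzzyNumber

/-- The metric `d(X,Y) = sup_{α∈[0,1]} max(|X̲^(α)−Y̲^(α)|, |X̄^(α)−Ȳ^(α)|)`. -/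
noncomputable def dist (X Y : FuzzyNumber) : ℝ :=
  ⨆ α : Set.Icc (0:ℝ) 1, max |X.lower α - Y.lower α| |X.upper α - Y.upper α|

/-- Levelwise addition. -/
def add (X Y : FuzzyNumber) : FuzzyNumber where
  lower := fun α => X.lower α + Y.lower α
  upper := fun α => X.upper α + Y.upper α
  lower_mono := X.lower_mono.add Y.lower_mono
  upper_anti := X.upper_anti.add Y.upper_anti
  lower_leftCont := fun a ha => (X.lower_leftCont a ha).add (Y.lower_leftCont a ha)
  upper_leftCont := fun a ha => (X.upper_leftCont a ha).add (Y.upper_leftCont a ha)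
  lower_rightCont := X.lower_rightCont.add Y.lower_rightCont
  upper_rightCont := X.upper_rightCont.add Y.upper_rightCont
  le_at_one := add_le_add X.le_at_one Y.le_at_one

/-- Levelwise negation: `(−Y)^(α) = [−Ȳ^(α), −Y̲^(α)]`. -/
def neg (X : FuzzyNumber) : FuzzyNumber where
  lower := fun α => -X.upper α
  upper := fun α => -X.lower α
  lower_mono := X.upper_anti.neg
  upper_anti := X.lower_mono.neg
  lower_leftCont := fun a ha => (X.upper_leftCont a ha).neg
  upper_leftCont := fun a ha => (X.lower_leftCont a ha).neg
  lower_rightCont := X.upper_rightCont.neg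
  upper_rightCont := X.lower_rightCont.neg
  le_at_one := neg_le_neg X.le_at_one

/-- `X − Y = X + (−Y)`. -/
def sub (X Y : FuzzyNumber) : FuzzyNumber := X.add Y.neg

/-- The crisp fuzzy number `r̄`. -/
def const (r : ℝ) : FuzzyNumber where
  lower := fun _ => r
  upper := fun _ => r
  lower_mono := monotoneOn_const
  upper_anti := antitoneOn_const
  lower_leftCont := fun _ _ => continuousWithinAt_const
  upper_leftCont := fun _ _ => continuousWithinAt_const
  lower_rightCont := continuousWithinAt_const
  upper_rightCont := continuousWithinAt_const
  le_at_one := le_refl r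

/-- The membership function `X(t) = sup{α ∈ [0,1] : X̲^(α) ≤ t ≤ X̄^(α)}`. -/
noncomputable def memFun (X : FuzzyNumber) (t : ℝ) : ℝ :=
  sSup {a : ℝ | a ∈ Set.Icc (0:ℝ) 1 ∧ X.lower a ≤ t ∧ t ≤ X.upper a}

/-- A fuzzy number `S` is symmetric if `S(t) = S(−t)` for all `t`. -/
def IsSymmetric (S : FuzzyNumber) : Prop := ∀ t : ℝ, S.memFun t = S.memFun (-t)

/-- The difference sequence `ΔX_k = X_k − X_{k+1}`. -/
def delta (X : ℕ → FuzzyNumber) (k : ℕ) : FuzzyNumber := (X k).sub (X (k+1))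

/-- Membership in `bv^F(u,v)`:
`Σ_{k=0}^∞ |Σ_{i=0}^k u_k v_i d(ΔX_i, 0̄)| < ∞`. -/
def MemBvF (u v : ℕ → ℝ) (X : ℕ → FuzzyNumber) : Prop :=
  Summable fun k => |∑ i ∈ Finset.range (k+1), u k * v i * dist (delta X i) (const 0)|

end FuzzyNumber


namespace FuzzyNumber

lemma lower_le_upper' (X : FuzzyNumber) {a : ℝ} (ha : a ∈ Set.Icc (0:ℝ) 1) :
    X.lower a ≤ X.upper a := by
  have h1 : X.lower a ≤ X.lower 1 := X.lower_mono ha (by norm_num) ha.2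
  have h2 : X.upper 1 ≤ X.upper a := X.upper_anti ha (by norm_num) ha.2
  linarith [X.le_at_one]

lemma le_memFun (X : FuzzyNumber) {a t : ℝ} (ha : a ∈ Set.Icc (0:ℝ) 1)
    (hl : X.lower a ≤ t) (hu : t ≤ X.upper a) : a ≤ X.memFun t :=
  le_csSup ⟨1, fun b hb => hb.1.2⟩ ⟨ha, hl, hu⟩

lemma memFun_cut (X : FuzzyNumber) {a t : ℝ} (ha : a ∈ Set.Ioc (0:ℝ) 1)
    (h : a ≤ X.memFun t) : X.lower a ≤ t ∧ t ≤ X.upper a := by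
  have key : ∀ b ∈ Set.Ico (0:ℝ) a, X.lower b ≤ t ∧ t ≤ X.upper b := by
    intro b hb
    by_contra hcon
    have hb1 : b ∈ Set.Icc (0:ℝ) 1 := ⟨hb.1, le_trans hb.2.le ha.2⟩
    have hle : X.memFun t ≤ b := by
      apply Real.sSup_le _ hb.1
      intro c hc
      by_contra hbc
      push_neg at hbc
      have hc1 : c ∈ Set.Icc (0:ℝ) 1 := hc.1
      have hbc' : b ≤ c := hbc.le
      exact hcon ⟨le_trans (X.lower_mono hb1 hc1 hbc') hc.2.1,
        le_trans hc.2.2 (X.upper_anti hb1 hc1 hbc')⟩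
    linarith [hb.2]
  have hne : (𝓝[Set.Ico (0:ℝ) a] a).NeBot := by
    rw [← mem_closure_iff_nhdsWithin_neBot, closure_Ico ha.1.ne]
    exact ⟨ha.1.le, le_refl a⟩
  have hsub : Set.Ico (0:ℝ) a ⊆ Set.Iic a := fun x hx => hx.2.le
  have hev : ∀ᶠ b in 𝓝[Set.Ico (0:ℝ) a] a, b ∈ Set.Ico (0:ℝ) a :=
    eventually_mem_nhdsWithin
  constructor
  · have hc : Filter.Tendsto X.lower (𝓝[Set.Ico (0:ℝ) a] a) (𝓝 (X.lower a)) :=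
      (X.lower_leftCont a ha).mono hsub
    exact le_of_tendsto hc (hev.mono fun b hb => (key b hb).1)
  · have hc : Filter.Tendsto X.upper (𝓝[Set.Ico (0:ℝ) a] a) (𝓝 (X.upper a)) :=
      (X.upper_leftCont a ha).mono hsub
    exact ge_of_tendsto hc (hev.mono fun b hb => (key b hb).2)

lemma symm_mid_zero (S : FuzzyNumber) (h : S.IsSymmetric) {a : ℝ}
    (ha : a ∈ Set.Icc (0:ℝ) 1) : S.lower a + S.upper a = 0 := by
  have main : ∀ b ∈ Set.Ioc (0:ℝ) 1, S.lower b + S.upper b = 0 := by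
    intro b hb
    have hb1 : b ∈ Set.Icc (0:ℝ) 1 := ⟨hb.1.le, hb.2⟩
    have hlu := S.lower_le_upper' hb1
    have h1 : b ≤ S.memFun (-(S.upper b)) :=
      (h (S.upper b)) ▸ S.le_memFun hb1 hlu le_rfl
    have h2 : b ≤ S.memFun (-(S.lower b)) :=
      (h (S.lower b)) ▸ S.le_memFun hb1 le_rfl hlu
    have c1 := (S.memFun_cut hb h1).1
    have c2 := (S.memFun_cut hb h2).2
    linarith
  rcases eq_or_lt_of_le ha.1 with h0 | h0
  · have hc : Filter.Tendsto (fun b => S.lower b + S.upper b)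
        (𝓝[Set.Ioc (0:ℝ) 1] 0) (𝓝 (S.lower 0 + S.upper 0)) :=
      (S.lower_rightCont.add S.upper_rightCont).mono fun x hx => hx.1.le
    have hne : (𝓝[Set.Ioc (0:ℝ) 1] (0:ℝ)).NeBot := by
      rw [← mem_closure_iff_nhdsWithin_neBot, closure_Ioc (by norm_num : (0:ℝ) ≠ 1)]
      exact ⟨le_refl 0, by norm_num⟩
    have hc0 : Filter.Tendsto (fun b => S.lower b + S.upper b)
        (𝓝[Set.Ioc (0:ℝ) 1] 0) (𝓝 0) := by
      refine (Filter.tendsto_congr' ?_).mpr tendsto_const_nhds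
      exact eventually_mem_nhdsWithin.mono fun b hb => main b hb
    have := tendsto_nhds_unique hc hc0
    rw [← h0]
    exact this
  · exact main a ⟨h0, ha.2⟩

end FuzzyNumber

open FuzzyNumber in
/-- equivalent fuzzy numbers have the same midpoint function. -/
theorem equiv_same_midpoint (X Y S₁ S₂ : FuzzyNumber)
    (h₁ : S₁.IsSymmetric) (h₂ : S₂.IsSymmetric) (heq : X.add S₁ = Y.add S₂) :
    ∀ α ∈ Set.Icc (0:ℝ) 1,
      (X.lower α + X.upper α) / 2 = (Y.lower α + Y.upper α) / 2 := by
  intro a ha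
  have e1 : X.lower a + S₁.lower a = Y.lower a + S₂.lower a :=
    congrFun (congrArg FuzzyNumber.lower heq) a
  have e2 : X.upper a + S₁.upper a = Y.upper a + S₂.upper a :=
    congrFun (congrArg FuzzyNumber.upper heq) a
  have m1 := S₁.symm_mid_zero h₁ ha
  have m2 := S₂.symm_mid_zero h₂ ha
  linarith
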